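/- For any set A ⊆ ℕ, A computes a function f with W_{f(n)} ≠ W_n for all n if and only if A computes a function g with φ_{g(e)} ≠ φ_e for all e. -/

import Mathlib

open Part

/-- The `n`-th partial computable function in a standard numbering. -/
def phi (n : ℕ) : ℕ →. ℕ := (Denumerable.ofNat Nat.Partrec.Code n).eval

/-- `W n` is the domain of the `n`-th partial computable function. -/
def Wdom (n : ℕ) : Set ℕ := {x | (phi n x).Dom}

/-- Partial functions computable relative to a partial oracle `O`. -/
inductive RecursiveInOracle (O : ℕ →. ℕ) : (ℕ →. ℕ) → Prop
  | oracle : RecursiveInOracle O O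
  | zero : RecursiveInOracle O (pure 0)
  | succ : RecursiveInOracle O Nat.succ
  | left : RecursiveInOracle O ↑fun n : ℕ => n.unpair.1
  | right : RecursiveInOracle O ↑fun n : ℕ => n.unpair.2
  | pair {f g} : RecursiveInOracle O f → RecursiveInOracle O g →
      RecursiveInOracle O fun n => Nat.pair <$> f n <*> g n
  | comp {f g} : RecursiveInOracle O f → RecursiveInOracle O g →
      RecursiveInOracle O fun n => g n >>= f
  | prec {f g} : RecursiveInOracle O f → RecursiveInOracle O g →
      RecursiveInOracle O (Nat.unpaired fun a n =>
        n.rec (f a) fun y IH => do let i ← IH; g (Nat.pair a (Nat.pair y i)))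
  | rfind {f} : RecursiveInOracle O f →
      RecursiveInOracle O fun a => Nat.rfind fun n => (fun m => m = 0) <$> f (Nat.pair a n)

open Classical in
/-- The characteristic function of a set `A` as a partial oracle. -/
noncomputable def chi (A : Set ℕ) : ℕ →. ℕ := fun n => Part.some (if n ∈ A then 1 else 0)

/-- A total function is computable relative to the set `A`. -/
def ComputableInSet (A : Set ℕ) (f : ℕ → ℕ) : Prop := RecursiveInOracle (chi A) ↑f

/-- A partial function is computable relative to the set `A`. -/
def PartComputableInSet (A : Set ℕ) (f : ℕ →. ℕ) : Prop := RecursiveInOracle (chi A) f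

/-- Turing reducibility between sets of naturals. -/
def TuringLe (A B : Set ℕ) : Prop := RecursiveInOracle (chi B) (chi A)

/-- The halting set ∅′. -/
def K0 : Set ℕ := {n | (phi n n).Dom}

/-- `A` is computably enumerable. -/
def CE (A : Set ℕ) : Prop := REPred (· ∈ A)

section Aux

open Nat.Partrec Nat.Partrec.Code

theorem RecursiveInOracle.of_partrec {O : ℕ →. ℕ} {f : ℕ →. ℕ} (h : Nat.Partrec f) :
    RecursiveInOracle O f := by
  induction h with
  | zero => exact .zero
  | succ => exact .succ
  | left => exact .left
  | right => exact .right
  | pair _ _ ih₁ ih₂ => exact .pair ih₁ ih₂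
  | comp _ _ ih₁ ih₂ => exact .comp ih₁ ih₂
  | prec _ _ ih₁ ih₂ => exact .prec ih₁ ih₂
  | rfind _ ih => exact .rfind ih

theorem RecursiveInOracle.totalComp {O : ℕ →. ℕ} {f g : ℕ → ℕ} (hf : RecursiveInOracle O ↑f)
    (hg : RecursiveInOracle O ↑g) : RecursiveInOracle O ↑(fun n => f (g n)) := by
  have h := RecursiveInOracle.comp hf hg
  refine (congrArg (RecursiveInOracle O) ?_).mpr h
  funext n
  change Part.some (f (g n)) = Part.bind (Part.some (g n)) (fun x => Part.some (f x))
  rw [Part.bind_some]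

theorem phi_encode (c : Nat.Partrec.Code) : phi (Encodable.encode c) = c.eval := by
  simp [phi]

/-- The binary partial function used to make `W` of an index equal a graph. -/
def graphF : ℕ →. ℕ := fun a =>
  (eval (Denumerable.ofNat Nat.Partrec.Code a.unpair.1) a.unpair.2.unpair.1).bind
    fun v => Part.ofOption (if v = a.unpair.2.unpair.2 then some 0 else none)

theorem graphF_partrec : Nat.Partrec graphF := by
  have h1 : Partrec fun a : ℕ =>
      eval (Denumerable.ofNat Nat.Partrec.Code a.unpair.1) a.unpair.2.unpair.1 :=
    eval_part.comp ((Computable.ofNat _).comp (Computable.fst.comp Computable.unpair))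
      (Computable.fst.comp (Computable.unpair.comp (Computable.snd.comp Computable.unpair)))
  have h2 : Primrec₂ fun (a : ℕ) (v : ℕ) =>
      (if v = a.unpair.2.unpair.2 then some 0 else none : Option ℕ) := by
    apply Primrec.ite
    · exact PrimrecRel.comp Primrec.eq Primrec.snd
        (Primrec.snd.comp (Primrec.unpair.comp (Primrec.snd.comp (Primrec.unpair.comp Primrec.fst))))
    · exact Primrec.const _
    · exact Primrec.const _
  exact Partrec.nat_iff.1 (h1.bind (Computable.ofOption h2.to_comp).to₂)

theorem graphF_dom {e m : ℕ} :
    (graphF (Nat.pair e m)).Dom ↔ m.unpair.2 ∈ phi e m.unpair.1 := by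
  rw [Part.dom_iff_mem]
  simp only [graphF, Nat.unpair_pair]
  constructor
  · rintro ⟨z, hz⟩
    rcases Part.mem_bind_iff.1 hz with ⟨v, hv, hz'⟩
    by_cases hvt : v = m.unpair.2
    · subst hvt; exact hv
    · simp [hvt] at hz'
  · intro h
    exact ⟨0, Part.mem_bind_iff.2 ⟨_, h, by simp⟩⟩

/-- Search a set (viewed as a graph) for a value at a given argument. -/
def searchFn (a k : ℕ) : Option ℕ :=
  (evaln k.unpair.2 (Denumerable.ofNat Nat.Partrec.Code a.unpair.1)
    (Nat.pair a.unpair.2 k.unpair.1)).map fun _ => k.unpair.1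

def searchF : ℕ →. ℕ := fun a => Nat.rfindOpt (searchFn a)

theorem searchF_partrec : Nat.Partrec searchF := by
  have h : Computable₂ searchFn := by
    have : Primrec₂ searchFn := by
      unfold searchFn
      apply Primrec.option_map
      · exact primrec_evaln.comp (((Primrec.snd.comp (Primrec.unpair.comp Primrec.snd)).pair
          ((Primrec.ofNat _).comp (Primrec.fst.comp (Primrec.unpair.comp Primrec.fst)))).pair
          (Primrec₂.natPair.comp (Primrec.snd.comp (Primrec.unpair.comp Primrec.fst))
            (Primrec.fst.comp (Primrec.unpair.comp Primrec.snd))))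
      · exact (Primrec.fst.comp (Primrec.unpair.comp (Primrec.snd.comp Primrec.fst))).to₂
    exact this.to_comp
  exact Partrec.nat_iff.1 (Partrec.rfindOpt h)

theorem searchF_mem {n x y : ℕ} (h : y ∈ searchF (Nat.pair n x)) :
    (phi n (Nat.pair x y)).Dom := by
  obtain ⟨k, hk⟩ := Nat.rfindOpt_spec h
  simp only [searchFn, Nat.unpair_pair, Option.mem_def, Option.map_eq_some_iff] at hk
  obtain ⟨v, hv, hy⟩ := hk
  subst hy
  exact Part.dom_iff_mem.2 ⟨v, evaln_sound hv⟩

theorem searchF_dom {n x y : ℕ} (h : (phi n (Nat.pair x y)).Dom) :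
    (searchF (Nat.pair n x)).Dom := by
  obtain ⟨v, hv⟩ := Part.dom_iff_mem.1 h
  obtain ⟨k, hk⟩ := evaln_complete.1 hv
  apply Nat.rfindOpt_dom.2
  refine ⟨Nat.pair y k, y, ?_⟩
  simp only [searchFn, Nat.unpair_pair, Option.mem_def, Option.map_eq_some_iff]
  exact ⟨v, hk, trivial⟩

end Aux

open Nat.Partrec Nat.Partrec.Code in
theorem fpf_iff_ext_fpf (A : Set ℕ) :
    (∃ f : ℕ → ℕ, ComputableInSet A f ∧ ∀ n, Wdom (f n) ≠ Wdom n) ↔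
    (∃ g : ℕ → ℕ, ComputableInSet A g ∧ ∀ e, phi (g e) ≠ phi e) := by
  constructor
  · rintro ⟨f, hf, hW⟩
    exact ⟨f, hf, fun e h => hW e (by rw [Wdom, Wdom, h])⟩
  · rintro ⟨g, hg, hphi⟩
    obtain ⟨cF, hcF⟩ := exists_code.1 graphF_partrec
    obtain ⟨cG, hcG⟩ := exists_code.1 searchF_partrec
    set cfun : ℕ → ℕ := fun e => Encodable.encode (cF.curry e) with hcfun
    set dfun : ℕ → ℕ := fun n => Encodable.encode (cG.curry n) with hdfun
    have hphic : ∀ e m, phi (cfun e) m = graphF (Nat.pair e m) := by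
      intro e m
      rw [hcfun, phi_encode, eval_curry, hcF]
    have hphid : ∀ n x, phi (dfun n) x = searchF (Nat.pair n x) := by
      intro n x
      rw [hdfun, phi_encode, eval_curry, hcG]
    have hccomp : ComputableInSet A fun n => cfun (g (dfun n)) := by
      have hc : RecursiveInOracle (chi A) ↑cfun := by
        apply RecursiveInOracle.of_partrec
        apply Partrec.nat_iff.1
        exact Primrec.to_comp (Primrec.encode.comp (primrec₂_curry.comp (Primrec.const cF) Primrec.id))
      have hd : RecursiveInOracle (chi A) ↑dfun := by
        apply RecursiveInOracle.of_partrec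
        apply Partrec.nat_iff.1
        exact Primrec.to_comp (Primrec.encode.comp (primrec₂_curry.comp (Primrec.const cG) Primrec.id))
      exact RecursiveInOracle.totalComp hc (RecursiveInOracle.totalComp hg hd)
    refine ⟨fun n => cfun (g (dfun n)), hccomp, ?_⟩
    intro n hWeq
    set e : ℕ := g (dfun n) with he
    -- From W_{cfun e} = W_n : membership of pairs in W_n encodes graph of phi e
    have h1 : ∀ x y, (phi n (Nat.pair x y)).Dom ↔ y ∈ phi e x := by
      intro x y
      have := Set.ext_iff.1 hWeq (Nat.pair x y)
      rw [Wdom, Wdom, Set.mem_setOf_eq, Set.mem_setOf_eq, hphic] at this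
      rw [← this, graphF_dom, Nat.unpair_pair]
    -- phi (dfun n) = phi e, contradicting fixed-point-freeness of g
    apply hphi (dfun n)
    have : phi (dfun n) = phi e := by
      funext x
      apply Part.ext
      intro y
      rw [hphid]
      constructor
      · intro hy
        exact (h1 x y).1 (searchF_mem hy)
      · intro hy
        have hdom : (searchF (Nat.pair n x)).Dom := searchF_dom ((h1 x y).2 hy)
        have hy' : (searchF (Nat.pair n x)).get hdom ∈ searchF (Nat.pair n x) :=
          Part.get_mem hdom
        have : (searchF (Nat.pair n x)).get hdom ∈ phi e x :=
          (h1 x _).1 (searchF_mem hy')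
        rwa [Part.mem_unique hy this]
    rw [← he, this]
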